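/- Let Ŝ be a sampling of [n] and τ a constant with |Ŝ| ≤ τ almost surely. Then P(Ŝ) ⪯ τ · Diag(P(Ŝ)) in the positive semidefinite order; equivalently λ'(P(Ŝ)) ≤ τ. -/

import Mathlib

open Finset Matrix BigOperators

noncomputable def probMatrix {n : ℕ} {Ω : Type*} [Fintype Ω]
    (w : Ω → ℝ) (Shat : Ω → Finset (Fin n)) : Matrix (Fin n) (Fin n) ℝ :=
  fun i j => ∑ ω, if i ∈ Shat ω ∧ j ∈ Shat ω then w ω else 0

/-- Normalized largest eigenvalue: `λ′(M) = sup { hᵀ M h : hᵀ Diag(M) h ≤ 1 }`. -/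
noncomputable def lambdaPrime {n : ℕ} (M : Matrix (Fin n) (Fin n) ℝ) : ℝ :=
  sSup {r : ℝ | ∃ h : Fin n → ℝ,
    h ⬝ᵥ (Matrix.diagonal fun i => M i i).mulVec h ≤ 1 ∧ r = h ⬝ᵥ M.mulVec h}

lemma quadP {n : ℕ} {Ω : Type*} [Fintype Ω] (w : Ω → ℝ) (Shat : Ω → Finset (Fin n))
    (h : Fin n → ℝ) :
    h ⬝ᵥ (probMatrix w Shat).mulVec h = ∑ ω, w ω * (∑ i ∈ Shat ω, h i)^2 := by
  simp only [dotProduct, mulVec, probMatrix, Finset.mul_sum, Finset.sum_mul, mul_ite, ite_mul,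
    mul_zero, zero_mul]
  have e1 : ∀ i : Fin n, (∑ j : Fin n, ∑ ω : Ω, if i ∈ Shat ω ∧ j ∈ Shat ω
      then h i * (w ω * h j) else 0)
      = ∑ ω : Ω, ∑ j : Fin n, if i ∈ Shat ω ∧ j ∈ Shat ω then h i * (w ω * h j) else 0 :=
    fun i => Finset.sum_comm
  simp only [e1]
  rw [Finset.sum_comm]
  refine Finset.sum_congr rfl fun ω _ => ?_
  have e2 : ∀ i : Fin n, (∑ j : Fin n, if i ∈ Shat ω ∧ j ∈ Shat ω
      then h i * (w ω * h j) else 0)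
      = if i ∈ Shat ω then h i * (w ω * ∑ j ∈ Shat ω, h j) else 0 := by
    intro i
    by_cases hi : i ∈ Shat ω <;>
      simp [hi, Finset.sum_ite_mem, Finset.univ_inter, Finset.mul_sum]
  simp only [e2]
  rw [Finset.sum_ite_mem, Finset.univ_inter, ← Finset.sum_mul]
  ring

lemma quadD {n : ℕ} {Ω : Type*} [Fintype Ω] (w : Ω → ℝ) (Shat : Ω → Finset (Fin n))
    (h : Fin n → ℝ) :
    h ⬝ᵥ (Matrix.diagonal fun i => probMatrix w Shat i i).mulVec h
      = ∑ ω, w ω * ∑ i ∈ Shat ω, (h i)^2 := by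
  simp only [dotProduct, mulVec_diagonal, probMatrix, and_self, Finset.mul_sum, Finset.sum_mul,
    mul_ite, ite_mul, mul_zero, zero_mul]
  rw [Finset.sum_comm]
  refine Finset.sum_congr rfl fun ω _ => ?_
  rw [Finset.sum_ite_mem, Finset.univ_inter]
  exact Finset.sum_congr rfl fun i _ => by ring

lemma key_ineq {n : ℕ} {Ω : Type*} [Fintype Ω]
    (w : Ω → ℝ) (hw0 : ∀ ω, 0 ≤ w ω)
    (Shat : Ω → Finset (Fin n)) (τ : ℕ)
    (hcard : ∀ ω, w ω ≠ 0 → (Shat ω).card ≤ τ) (h : Fin n → ℝ) :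
    h ⬝ᵥ (probMatrix w Shat).mulVec h
      ≤ (τ : ℝ) * (h ⬝ᵥ (Matrix.diagonal fun i => probMatrix w Shat i i).mulVec h) := by
  rw [quadP, quadD, Finset.mul_sum]
  refine Finset.sum_le_sum fun ω _ => ?_
  by_cases hw : w ω = 0
  · simp [hw]
  · have hc : ((Shat ω).card : ℝ) ≤ τ := Nat.cast_le.mpr (hcard ω hw)
    have h1 : (∑ i ∈ Shat ω, h i)^2 ≤ (Shat ω).card * ∑ i ∈ Shat ω, (h i)^2 :=
      sq_sum_le_card_mul_sum_sq
    have h2 : (0:ℝ) ≤ ∑ i ∈ Shat ω, (h i)^2 :=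
      Finset.sum_nonneg fun i _ => sq_nonneg _
    nlinarith [hw0 ω, mul_le_mul_of_nonneg_left h1 (hw0 ω),
      mul_le_mul_of_nonneg_right hc h2, mul_le_mul_of_nonneg_left
        (mul_le_mul_of_nonneg_right hc h2) (hw0 ω)]

theorem probMatrix_le_tau_diag
    {n : ℕ} {Ω : Type*} [Fintype Ω]
    (w : Ω → ℝ) (hw0 : ∀ ω, 0 ≤ w ω) (hw1 : ∑ ω, w ω = 1)
    (Shat : Ω → Finset (Fin n)) (τ : ℕ)
    (hcard : ∀ ω, w ω ≠ 0 → (Shat ω).card ≤ τ) :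
    (((τ : ℝ) • Matrix.diagonal (fun i => probMatrix w Shat i i)) -
        probMatrix w Shat).PosSemidef ∧
      lambdaPrime (probMatrix w Shat) ≤ τ := by
  constructor
  · rw [posSemidef_iff_dotProduct_mulVec]
    constructor
    · have hP : (probMatrix w Shat).IsHermitian := by
        ext i j
        simp [probMatrix, conjTranspose_apply, and_comm]
      have hD : ((τ : ℝ) • Matrix.diagonal fun i => probMatrix w Shat i i).IsHermitian := by
        ext i j
        by_cases hij : i = j <;> simp [hij, conjTranspose_apply, Matrix.diagonal_apply,
          Ne.symm, eq_comm]
      exact hD.sub hP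
    · intro x
      have hk := key_ineq w hw0 Shat τ hcard x
      simpa [sub_mulVec, dotProduct_sub, Matrix.smul_mulVec, dotProduct_smul,
        smul_eq_mul, sub_nonneg, star_trivial] using hk
  · refine Real.sSup_le ?_ (by positivity)
    rintro r ⟨h, hD1, rfl⟩
    calc h ⬝ᵥ (probMatrix w Shat).mulVec h
        ≤ (τ : ℝ) * (h ⬝ᵥ (Matrix.diagonal fun i => probMatrix w Shat i i).mulVec h) :=
          key_ineq w hw0 Shat τ hcard h
      _ ≤ (τ : ℝ) * 1 := mul_le_mul_of_nonneg_left hD1 (by positivity)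
      _ = τ := mul_one _
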